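/- Let $0 < \alpha < n$ and $1 < p < q \le n/\alpha$. For every cube $Q$ and every $x \in \mathbb{R}^n$, $M_\alpha[|f|^p \mathbf{1}_Q](x) \le \|f\|_{\mathcal{M}^{q, n/\alpha}} \cdot \left( M[|f|^{(p-1)q'} \mathbf{1}_Q](x) \right)^{1/q'}$, where $q' = q/(q-1)$ and $M$ is the Hardy-Littlewood maximal operator. -/

import Mathlib

open MeasureTheory ENNReal

noncomputable section

/-- An axis-parallel cube in `ℝⁿ`, given by its corner and (positive) side length. -/
structure Cube (n : ℕ) where
  corner : Fin n → ℝ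
  side : ℝ
  side_pos : 0 < side

/-- The underlying set of a cube. -/
def Cube.set {n : ℕ} (Q : Cube n) : Set (Fin n → ℝ) :=
  Set.univ.pi fun i => Set.Ico (Q.corner i) (Q.corner i + Q.side)

/-- The Morrey norm `‖f‖_{M^{p,p₀}}`. -/
def morreyNorm {n : ℕ} (p p₀ : ℝ) (f : (Fin n → ℝ) → ℝ≥0∞) : ℝ≥0∞ :=
  ⨆ Q : Cube n, volume Q.set ^ (1 / p₀) *
    ((∫⁻ x in Q.set, f x ^ p) / volume Q.set) ^ (1 / p)

/-- The fractional maximal operator; `fracMax 0` is the Hardy-Littlewood maximal operator. -/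
def fracMax {n : ℕ} (α : ℝ) (g : (Fin n → ℝ) → ℝ≥0∞) (x : Fin n → ℝ) : ℝ≥0∞ :=
  ⨆ Q : Cube n, ⨆ _ : x ∈ Q.set, ENNReal.ofReal Q.side ^ (α - n) * ∫⁻ y in Q.set, g y

/-- helper -/
lemma Cube.volume_set {n : ℕ} (Q : Cube n) :
    volume Q.set = ENNReal.ofReal Q.side ^ ((n : ℝ)) := by
  rw [Cube.set, volume_pi_pi]
  simp [Real.volume_Ico, ← ENNReal.rpow_natCast]


/-- pointwise bound
`M_α[|f|^p 1_Q](x) ≤ ‖f‖_{M^{q,n/α}} (M[|f|^{(p-1)q'} 1_Q](x))^{1/q'}`. -/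
theorem fracMax_pointwise_bound (n : ℕ) (α p q : ℝ) (hα0 : 0 < α) (hαn : α < n)
    (hp : 1 < p) (hpq : p < q) (hq : q ≤ n / α)
    (f : (Fin n → ℝ) → ℝ≥0∞) (hf : Measurable f) (Q : Cube n) (x : Fin n → ℝ) :
    fracMax α (Q.set.indicator fun y => f y ^ p) x ≤
      morreyNorm q (n / α) f *
        fracMax 0 (Q.set.indicator fun y => f y ^ ((p - 1) * (q / (q - 1)))) x
          ^ ((q - 1) / q) := by
  have hq1 : 1 < q := hp.trans hpq
  have hq0 : 0 < q := by linarith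
  set q' : ℝ := q / (q - 1) with hq'def
  have hconj : q.HolderConjugate q' := Real.HolderConjugate.conjExponent hq1
  have hq'0 : 0 < q' := hconj.symm.pos
  have hn0 : (0:ℝ) < n := hα0.trans hαn
  have hinvq' : 1 / q' = (q - 1) / q := by
    rw [hq'def]; field_simp
  have hQm : MeasurableSet Q.set := MeasurableSet.univ_pi fun i => measurableSet_Ico
  rw [fracMax]
  refine iSup₂_le fun R hx => ?_
  set s : ℝ≥0∞ := ENNReal.ofReal R.side with hsdef
  have hs0 : s ≠ 0 := by
    simp [hsdef, ENNReal.ofReal_eq_zero, not_le, R.side_pos]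
  have hst : s ≠ ⊤ := ENNReal.ofReal_ne_top
  -- Hölder
  set A : ℝ≥0∞ := ∫⁻ y in R.set, f y ^ q with hA
  set B : ℝ≥0∞ := ∫⁻ y in R.set, Q.set.indicator (fun y => f y ^ ((p - 1) * q')) y with hB
  have holder : (∫⁻ y in R.set, Q.set.indicator (fun y => f y ^ p) y) ≤
      A ^ (1/q) * B ^ (1/q') := by
    have hsplit : ∀ y, Q.set.indicator (fun y => f y ^ p) y =
        (Q.set.indicator f y) * (Q.set.indicator (fun y => f y ^ (p - 1)) y) := by
      intro y
      by_cases hy : y ∈ Q.set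
      · simp only [Set.indicator_of_mem hy]
        nth_rewrite 1 [show p = 1 + (p - 1) by ring]
        rw [ENNReal.rpow_add_of_nonneg _ _ zero_le_one (by linarith), ENNReal.rpow_one]
      · simp [Set.indicator_of_notMem hy]
    calc (∫⁻ y in R.set, Q.set.indicator (fun y => f y ^ p) y)
        = ∫⁻ y in R.set, ((Q.set.indicator f) * (Q.set.indicator fun y => f y ^ (p - 1))) y := by
          refine lintegral_congr fun y => ?_
          simpa using hsplit y
      _ ≤ (∫⁻ y in R.set, (Q.set.indicator f) y ^ q) ^ (1/q) *
          (∫⁻ y in R.set, (Q.set.indicator fun y => f y ^ (p - 1)) y ^ q') ^ (1/q') := by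
          refine ENNReal.lintegral_mul_le_Lp_mul_Lq _ hconj ?_ ?_
          · exact (hf.indicator hQm).aemeasurable
          · exact ((hf.pow_const _).indicator hQm).aemeasurable
      _ ≤ A ^ (1/q) * B ^ (1/q') := by
          gcongr
          · refine lintegral_mono fun y => ?_
            by_cases hy : y ∈ Q.set
            · simp [Set.indicator_of_mem hy]
            · simp [Set.indicator_of_notMem hy, ENNReal.zero_rpow_of_pos hq0]
          · refine le_of_eq (lintegral_congr fun y => ?_)
            by_cases hy : y ∈ Q.set
            · simp only [Set.indicator_of_mem hy]
              rw [← ENNReal.rpow_mul]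
            · simp [Set.indicator_of_notMem hy, ENNReal.zero_rpow_of_pos hq'0]
  -- Morrey bound
  have hvol : volume R.set = s ^ ((n:ℝ)) := R.volume_set
  have hmor : s ^ α * (A / s ^ ((n:ℝ))) ^ (1/q) ≤ morreyNorm q (n / α) f := by
    refine le_trans (le_of_eq ?_) (le_iSup _ R)
    rw [hvol, ← ENNReal.rpow_mul]
    congr 2
    rw [one_div, inv_div]
    field_simp
  -- fracMax bound
  have hfr : s ^ ((0:ℝ) - n) * B ≤
      fracMax 0 (Q.set.indicator fun y => f y ^ ((p - 1) * q')) x := by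
    exact le_iSup₂_of_le R hx le_rfl
  calc s ^ (α - n) * ∫⁻ y in R.set, Q.set.indicator (fun y => f y ^ p) y
      ≤ s ^ (α - n) * (A ^ (1/q) * B ^ (1/q')) := by gcongr
    _ = (s ^ α * (A / s ^ ((n:ℝ))) ^ (1/q)) * (s ^ ((0:ℝ) - n) * B) ^ (1/q') := by
        rw [ENNReal.div_rpow_of_nonneg _ _ (by positivity),
          show (0:ℝ) - n = -(n:ℝ) by ring, ENNReal.rpow_neg,
          ← ENNReal.div_eq_inv_mul, ENNReal.div_rpow_of_nonneg _ _ (by positivity),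
          ← ENNReal.rpow_mul, ← ENNReal.rpow_mul,
          div_eq_mul_inv (A ^ (1/q)), div_eq_mul_inv (B ^ (1/q')),
          ← ENNReal.rpow_neg, ← ENNReal.rpow_neg]
        rw [show s ^ α * (A ^ (1/q) * s ^ (-((n:ℝ) * (1/q)))) * (B ^ (1/q') * s ^ (-((n:ℝ) * (1/q'))))
          = (s ^ α * s ^ (-((n:ℝ) * (1/q))) * s ^ (-((n:ℝ) * (1/q')))) * (A ^ (1/q) * B ^ (1/q')) by ring]
        rw [← ENNReal.rpow_add _ _ hs0 hst, ← ENNReal.rpow_add _ _ hs0 hst]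
        have h1 : q⁻¹ + q'⁻¹ = 1 := hconj.inv_add_inv_eq_one
        have : α + -((n:ℝ) * (1/q)) + -((n:ℝ) * (1/q')) = α - n := by
          rw [one_div, one_div]
          linear_combination (-(n:ℝ)) * h1
        rw [this]
    _ ≤ morreyNorm q (n / α) f *
        (fracMax 0 (Q.set.indicator fun y => f y ^ ((p - 1) * q')) x) ^ ((q-1)/q) := by
        rw [← hinvq']
        gcongr
    _ = _ := by rw [hq'def]
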